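/- Let t ∈ [0,1) and let ν ∈ ℂ with ν ∉ Λ. Then the operator C_t − ν I is a bijection of ω onto itself (hence, by the open mapping theorem, a bicontinuous isomorphism of ω onto itself). In particular, the spectrum of C_t on ω is contained in Λ. -/

import Mathlib

/-- The generalized Cesàro operator `C_t` acting on complex sequences:
`(C_t x)_n = (1/(n+1)) ∑_{i=0}^n t^{n-i} x_i`. -/
noncomputable def genCesaro (t : ℝ) (x : ℕ → ℂ) : ℕ → ℂ :=
  fun n => (1 / ((n : ℂ) + 1)) * ∑ i ∈ Finset.range (n + 1), (t : ℂ) ^ (n - i) * x i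

/-- Explicit recursive inverse of `C_t - ν I`. -/
noncomputable def cesInv (t : ℝ) (ν : ℂ) (y : ℕ → ℂ) : ℕ → ℂ
  | n => (y n - (1 / ((n : ℂ) + 1)) *
      ∑ i ∈ (Finset.range n).attach, (t : ℂ) ^ (n - (i : ℕ)) * cesInv t ν y i) /
      (1 / ((n : ℂ) + 1) - ν)
  decreasing_by exact Finset.mem_range.mp i.2

lemma cesInv_eq (t : ℝ) (ν : ℂ) (y : ℕ → ℂ) (n : ℕ) :
    cesInv t ν y n = (y n - (1 / ((n : ℂ) + 1)) *
      ∑ i ∈ Finset.range n, (t : ℂ) ^ (n - i) * cesInv t ν y i) /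
      (1 / ((n : ℂ) + 1) - ν) := by
  rw [cesInv]
  rw [Finset.sum_attach (Finset.range n) (fun i => (t : ℂ) ^ (n - i) * cesInv t ν y i)]

lemma T_apply (t : ℝ) (ν : ℂ) (x : ℕ → ℂ) (n : ℕ) :
    (genCesaro t x - ν • x) n =
      (1 / ((n : ℂ) + 1)) * ∑ i ∈ Finset.range n, (t : ℂ) ^ (n - i) * x i +
      (1 / ((n : ℂ) + 1) - ν) * x n := by
  simp only [Pi.sub_apply, Pi.smul_apply, smul_eq_mul, genCesaro, Finset.sum_range_succ,
    Nat.sub_self, pow_zero, one_mul]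
  ring

noncomputable def Tlin (t : ℝ) (ν : ℂ) : (ℕ → ℂ) →ₗ[ℂ] (ℕ → ℂ) where
  toFun x := genCesaro t x - ν • x
  map_add' x y := by
    funext n
    simp only [Pi.sub_apply, Pi.add_apply, Pi.smul_apply, smul_eq_mul, genCesaro,
      mul_add, Finset.sum_add_distrib]
    ring
  map_smul' c x := by
    funext n
    simp only [Pi.sub_apply, Pi.smul_apply, smul_eq_mul, genCesaro, RingHom.id_apply]
    have : ∑ i ∈ Finset.range (n + 1), (t : ℂ) ^ (n - i) * (c * x i)
        = c * ∑ i ∈ Finset.range (n + 1), (t : ℂ) ^ (n - i) * x i := by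
      rw [Finset.mul_sum]
      exact Finset.sum_congr rfl fun i _ => by ring
    rw [this]
    ring

theorem genCesaro_sub_smul_bijective (t : ℝ) (ht : t ∈ Set.Ico (0 : ℝ) 1)
    (ν : ℂ) (hν : ν ∉ {z : ℂ | ∃ n : ℕ, z = 1 / ((n : ℂ) + 1)}) :
    Function.Bijective (fun x : ℕ → ℂ => genCesaro t x - ν • x) ∧
    ∃ e : (ℕ → ℂ) ≃L[ℂ] (ℕ → ℂ), ∀ x, e x = genCesaro t x - ν • x := by
  have hd : ∀ n : ℕ, (1 / ((n : ℂ) + 1) - ν) ≠ 0 := by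
    intro n h
    exact hν ⟨n, by linear_combination -h⟩
  -- right inverse
  have hR : ∀ y : ℕ → ℂ, (genCesaro t (cesInv t ν y) - ν • cesInv t ν y) = y := by
    intro y
    funext n
    rw [T_apply, cesInv_eq, ← mul_div_assoc, mul_div_cancel_left₀ _ (hd n)]
    ring
  -- left inverse
  have hL : ∀ x : ℕ → ℂ, cesInv t ν (genCesaro t x - ν • x) = x := by
    intro x
    funext n
    induction n using Nat.strong_induction_on with
    | _ n ih =>
      rw [cesInv_eq]
      have hsum : ∑ i ∈ Finset.range n,
          (t : ℂ) ^ (n - i) * cesInv t ν (genCesaro t x - ν • x) i =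
          ∑ i ∈ Finset.range n, (t : ℂ) ^ (n - i) * x i :=
        Finset.sum_congr rfl fun i hi => by rw [ih i (Finset.mem_range.mp hi)]
      rw [hsum, T_apply, add_sub_cancel_left]
      exact mul_div_cancel_left₀ _ (hd n)
  have hcontT : Continuous fun x : ℕ → ℂ => genCesaro t x - ν • x := by
    apply continuous_pi
    intro n
    simp only [Pi.sub_apply, Pi.smul_apply, smul_eq_mul, genCesaro]
    exact (continuous_const.mul (continuous_finset_sum _ fun i _ =>
      continuous_const.mul (continuous_apply i))).sub
      (continuous_const.mul (continuous_apply n))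
  have hcontInv : Continuous (cesInv t ν) := by
    apply continuous_pi
    intro n
    induction n using Nat.strong_induction_on with
    | _ n ih =>
      have : (fun y : ℕ → ℂ => cesInv t ν y n) = fun y =>
          (y n - (1 / ((n : ℂ) + 1)) *
            ∑ i ∈ Finset.range n, (t : ℂ) ^ (n - i) * cesInv t ν y i) /
          (1 / ((n : ℂ) + 1) - ν) := funext fun y => cesInv_eq t ν y n
      rw [this]
      exact ((continuous_apply n).sub (continuous_const.mul
        (continuous_finset_sum _ fun i hi =>
          continuous_const.mul (ih i (Finset.mem_range.mp hi))))).div_const _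
  have hLI : Function.LeftInverse (cesInv t ν) (fun x : ℕ → ℂ => genCesaro t x - ν • x) := hL
  have hRI : Function.RightInverse (cesInv t ν) (fun x : ℕ → ℂ => genCesaro t x - ν • x) := hR
  refine ⟨⟨hLI.injective, hRI.surjective⟩, ?_⟩
  refine ⟨{ toLinearMap := Tlin t ν, invFun := cesInv t ν,
            left_inv := hLI, right_inv := hRI,
            continuous_toFun := hcontT, continuous_invFun := hcontInv }, fun x => rfl⟩
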